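/- Suppose b = 0 and α, β₁, β₂, k₁, k₂ are all strictly positive. Then the set of fixed points of V in S³ is exactly {λ₄} ∪ Λ₉, where λ₄ = (0,0,0,1) and Λ₉ = {(x,u,y,v) ∈ S³ : u = 0 and v = 0}. -/
import Mathlib


/-- The discrete-time SISI epidemic operator. -/
noncomputable def sisiV (b α β₁ β₂ k₁ k₂ : ℝ) (p : ℝ × ℝ × ℝ × ℝ) : ℝ × ℝ × ℝ × ℝ :=
  (p.1 + b - b * p.1 - β₁ * (k₁ * p.2.1 + k₂ * p.2.2.2) * p.1,
   p.2.1 - b * p.2.1 - α * p.2.1 + β₁ * (k₁ * p.2.1 + k₂ * p.2.2.2) * p.1,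
   p.2.2.1 - b * p.2.2.1 + α * p.2.1 - β₂ * (k₁ * p.2.1 + k₂ * p.2.2.2) * p.2.2.1,
   p.2.2.2 - b * p.2.2.2 + β₂ * (k₁ * p.2.1 + k₂ * p.2.2.2) * p.2.2.1)

/-- The simplex S³ in ℝ⁴. -/
def simplexS3 : Set (ℝ × ℝ × ℝ × ℝ) :=
  {p | 0 ≤ p.1 ∧ 0 ≤ p.2.1 ∧ 0 ≤ p.2.2.1 ∧ 0 ≤ p.2.2.2 ∧
       p.1 + p.2.1 + p.2.2.1 + p.2.2.2 = 1}

theorem fixedPoints_b_zero (b α β₁ β₂ k₁ k₂ : ℝ)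
    (hb : b = 0) (hα : 0 < α) (hβ₁ : 0 < β₁) (hβ₂ : 0 < β₂)
    (hk₁ : 0 < k₁) (hk₂ : 0 < k₂) :
    {p : ℝ × ℝ × ℝ × ℝ | p ∈ simplexS3 ∧ sisiV b α β₁ β₂ k₁ k₂ p = p} =
      {((0 : ℝ), (0 : ℝ), (0 : ℝ), (1 : ℝ))} ∪
      {p : ℝ × ℝ × ℝ × ℝ | p ∈ simplexS3 ∧ p.2.1 = 0 ∧ p.2.2.2 = 0} := by
  subst hb
  ext ⟨x, u, y, v⟩
  simp only [Set.mem_setOf_eq, Set.mem_union, Set.mem_singleton_iff, simplexS3, sisiV,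
    Prod.mk.injEq]
  constructor
  · rintro ⟨⟨hx, hu, hy, hv, hsum⟩, e1, e2, e3, e4⟩
    by_cases hm : k₁ * u + k₂ * v = 0
    · right
      have hu0 : u = 0 := by nlinarith
      have hv0 : v = 0 := by nlinarith
      exact ⟨⟨hx, hu, hy, hv, hsum⟩, hu0, hv0⟩
    · left
      have hm' : 0 < k₁ * u + k₂ * v := lt_of_le_of_ne (by nlinarith) (Ne.symm hm)
      have hx0 : x = 0 := by
        rcases mul_eq_zero.mp (by nlinarith : (β₁ * (k₁ * u + k₂ * v)) * x = 0) with h | h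
        · exact absurd (mul_eq_zero.mp h) (by push_neg; exact ⟨hβ₁.ne', hm'.ne'⟩ )
        · exact h
      have hu0 : u = 0 := by nlinarith
      have hy0 : y = 0 := by
        rcases mul_eq_zero.mp (by nlinarith : (β₂ * (k₁ * u + k₂ * v)) * y = 0) with h | h
        · exact absurd (mul_eq_zero.mp h) (by push_neg; exact ⟨hβ₂.ne', hm'.ne'⟩ )
        · exact h
      have hv1 : v = 1 := by linarith
      exact ⟨hx0, hu0, hy0, hv1⟩
  · rintro (⟨hx, hu, hy, hv⟩ | ⟨⟨hx, hu, hy, hv, hsum⟩, hu0, hv0⟩)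
    · subst hx; subst hu; subst hy; subst hv
      refine ⟨⟨le_refl _, le_refl _, le_refl _, zero_le_one, by ring⟩, by ring, by ring, by ring, by ring⟩
    · subst hu0; subst hv0
      exact ⟨⟨hx, hu, hy, hv, hsum⟩, by ring, by ring, by ring, by ring⟩
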